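/- Let v_0 = r, v_1, …, v_k be vertices visited in order along a walk C in a graph that starts at r and traverses each edge of a spanning tree T_M exactly twice (once in each direction). Then Σ_{i=1}^{k} D(v_{i−1}, v_i) ≤ 2·w(T_M), where D denotes distance in T_M and w(T_M) is the total weight of T_M. -/

import Mathlib

open SimpleGraph Finset

noncomputable def walkWeight {V : Type*} {G : SimpleGraph V} (w : Sym2 V → ℝ)
    {u v : V} (p : G.Walk u v) : ℝ :=
  (p.edges.map w).sum

noncomputable def wdist {V : Type*} (G : SimpleGraph V) (w : Sym2 V → ℝ) (u v : V) : ℝ :=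
  sInf {x | ∃ p : G.Walk u v, walkWeight w p = x}

open scoped Classical in
noncomputable def gweight {V : Type*} [Fintype V] (G : SimpleGraph V) (w : Sym2 V → ℝ) : ℝ :=
  ∑ e ∈ G.edgeSet.toFinset, w e

lemma walkWeight_nonneg {V : Type*} {G : SimpleGraph V} (w : Sym2 V → ℝ)
    (hw : ∀ e, 0 ≤ w e) {u v : V} (p : G.Walk u v) : 0 ≤ walkWeight w p := by
  apply List.sum_nonneg
  intro x hx
  obtain ⟨e, _, rfl⟩ := List.mem_map.mp hx
  exact hw e

lemma wdist_le {V : Type*} {G : SimpleGraph V} (w : Sym2 V → ℝ)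
    (hw : ∀ e, 0 ≤ w e) {u v : V} (p : G.Walk u v) :
    wdist G w u v ≤ walkWeight w p := by
  apply csInf_le
  · exact ⟨0, fun x ⟨q, hq⟩ => hq ▸ walkWeight_nonneg w hw q⟩
  · exact ⟨p, rfl⟩

lemma edges_getElem' {V : Type*} {G : SimpleGraph V} {u v : V} (p : G.Walk u v)
    (i : ℕ) (hi : i < p.length) :
    p.edges[i]'(by simpa using hi) = s(p.getVert i, p.getVert (i+1)) := by
  induction p generalizing i with
  | nil => simp at hi
  | cons h q ih =>
    cases i with
    | zero => simp [SimpleGraph.Walk.getVert_cons_succ]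
    | succ n =>
      simp only [SimpleGraph.Walk.edges_cons, SimpleGraph.Walk.getVert_cons_succ]
      exact ih n (by simpa using hi)

lemma segment_walk {V : Type*} {G : SimpleGraph V} (w : Sym2 V → ℝ) {u v : V} (p : G.Walk u v)
    (a b : ℕ) (hab : a ≤ b) (hb : b ≤ p.length) :
    ∃ q : G.Walk (p.getVert a) (p.getVert b),
      walkWeight w q = ∑ j ∈ Finset.Ico a b, w (s(p.getVert j, p.getVert (j+1))) := by
  induction b with
  | zero =>
    obtain rfl : a = 0 := Nat.le_zero.mp hab
    exact ⟨SimpleGraph.Walk.nil, by simp [walkWeight]⟩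
  | succ n ih =>
    rcases Nat.lt_or_ge a (n+1) with h | h
    · have han : a ≤ n := Nat.lt_succ_iff.mp h
      obtain ⟨q, hq⟩ := ih han (le_trans (Nat.le_succ n) hb)
      have hadj : G.Adj (p.getVert n) (p.getVert (n+1)) :=
        p.adj_getVert_succ (Nat.lt_of_succ_le hb)
      refine ⟨q.concat hadj, ?_⟩
      rw [Finset.sum_Ico_succ_top han]
      simp only [walkWeight, SimpleGraph.Walk.edges_concat, List.map_append, List.sum_append]
      simp [walkWeight] at hq
      simp [hq]
    · obtain rfl : a = n + 1 := le_antisymm hab h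
      exact ⟨SimpleGraph.Walk.nil, by simp [walkWeight]⟩

/-- If `p` is a closed walk in a spanning tree `T` from the root that
traverses each edge of `T` exactly twice, and `v_0 = r, v_1, …, v_k` appear in this
order along the walk (at monotone positions `idx`), then the sum of consecutive tree
distances `Σ D(v_{i-1}, v_i)` is at most twice the weight of `T`. -/
theorem tour_distance_sum {V : Type*} [Fintype V] [DecidableEq V]
    (T : SimpleGraph V) (hT : T.IsTree) (w : Sym2 V → ℝ) (hw : ∀ e, 0 ≤ w e)
    (r : V) (p : T.Walk r r)
    (htwice : ∀ e ∈ T.edgeSet, p.edges.count e = 2)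
    (k : ℕ) (idx : ℕ → ℕ) (hmono : Monotone idx) (hidx0 : idx 0 = 0)
    (hidx : idx k ≤ p.length) :
    ∑ i ∈ Finset.Icc 1 k, wdist T w (p.getVert (idx (i - 1))) (p.getVert (idx i))
      ≤ 2 * gweight T w := by
  classical
  set f : ℕ → ℝ := fun j => w (s(p.getVert j, p.getVert (j+1))) with hf
  set S : ℕ → ℕ → ℝ := fun a b => ∑ j ∈ Finset.Ico a b, f j with hS
  -- step 1 : each wdist term bounded by segment sum
  have step1 : ∀ i ∈ Finset.Icc 1 k,
      wdist T w (p.getVert (idx (i - 1))) (p.getVert (idx i)) ≤ S (idx (i-1)) (idx i) := by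
    intro i hi
    rw [Finset.mem_Icc] at hi
    obtain ⟨q, hq⟩ := segment_walk w p (idx (i-1)) (idx i)
      (hmono (Nat.sub_le i 1)) (le_trans (hmono hi.2) hidx)
    simp only [hS, hf]
    rw [← hq]
    exact wdist_le w hw q
  have h1 := Finset.sum_le_sum step1
  -- step 2 : telescoping
  have tele : ∀ m, ∑ i ∈ Finset.Icc 1 m, S (idx (i-1)) (idx i) = S (idx 0) (idx m) := by
    intro m
    induction m with
    | zero => simp [hS]
    | succ n ih =>
      rw [← Finset.Ico_add_one_right_eq_Icc] at ih ⊢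
      rw [Finset.sum_Ico_succ_top (b := n + 1) (Nat.one_le_iff_ne_zero.mpr (Nat.succ_ne_zero n)), ih]
      simp only [hS, Nat.add_sub_cancel]
      exact Finset.sum_Ico_consecutive f (hmono (Nat.zero_le n)) (hmono (Nat.le_succ n))
  -- step 3 : S (idx 0) (idx k) ≤ walkWeight p
  have fnonneg : ∀ j, 0 ≤ f j := fun j => hw _
  have step3 : S (idx 0) (idx k) ≤ S 0 p.length := by
    rw [hidx0]
    apply Finset.sum_le_sum_of_subset_of_nonneg
    · exact Finset.Ico_subset_Ico le_rfl hidx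
    · intro j _ _; exact fnonneg j
  -- step 4 : S 0 p.length = walkWeight w p
  have step4 : S 0 p.length = walkWeight w p := by
    have hlist : List.ofFn (fun j : Fin p.length => f j.1) = p.edges.map w := by
      apply List.ext_getElem
      · simp
      · intro i h1 h2
        simp only [List.getElem_ofFn, List.getElem_map, hf]
        rw [edges_getElem' p i (by simpa using h1)]
    simp only [hS, walkWeight, ← hlist, List.sum_ofFn, ← Finset.range_eq_Ico]
    exact (Fin.sum_univ_eq_sum_range f p.length).symm
  -- step 5 : walkWeight p ≤ 2 * gweight
  have step5 : walkWeight w p ≤ 2 * gweight T w := by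
    rw [walkWeight, Finset.sum_list_map_count]
    have hsub : p.edges.toFinset ⊆ T.edgeSet.toFinset := by
      intro e he
      rw [Set.mem_toFinset]
      exact p.edges_subset_edgeSet (List.mem_toFinset.mp he)
    calc ∑ m ∈ p.edges.toFinset, p.edges.count m • w m
        = ∑ m ∈ p.edges.toFinset, 2 * w m := by
          apply Finset.sum_congr rfl
          intro m hm
          rw [htwice m (p.edges_subset_edgeSet (List.mem_toFinset.mp hm))]
          simp
      _ ≤ ∑ m ∈ T.edgeSet.toFinset, 2 * w m := by
          apply Finset.sum_le_sum_of_subset_of_nonneg hsub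
          intro e _ _
          exact mul_nonneg (by norm_num) (hw e)
      _ = 2 * gweight T w := by
          rw [gweight, Finset.mul_sum]
  calc ∑ i ∈ Finset.Icc 1 k, wdist T w (p.getVert (idx (i - 1))) (p.getVert (idx i))
      ≤ ∑ i ∈ Finset.Icc 1 k, S (idx (i-1)) (idx i) := h1
    _ = S (idx 0) (idx k) := tele k
    _ ≤ S 0 p.length := step3
    _ = walkWeight w p := step4
    _ ≤ 2 * gweight T w := step5
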